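/- Let p be an odd prime and n a positive integer, and let S be a simultaneously negacyclic subspace of F_p^n × F_p^n. Then S is totally isotropic if and only if for any two elements (a,b) and (c,d) of S, the corresponding elements of R = F_p[X]/(X^n+1) satisfy a(x)·d(x⁻¹) − b(x)·c(x⁻¹) = 0 in R. -/

import Mathlib

open Polynomial

/-- The negacyclic shift `N : F_p^n → F_p^n`. -/
def negashift (p n : ℕ) (hn : 0 < n) (u : Fin n → ZMod p) : Fin n → ZMod p :=
  fun i => if (i : ℕ) = 0 then -u ⟨n - 1, Nat.sub_lt hn Nat.one_pos⟩
           else u ⟨(i : ℕ) - 1, Nat.lt_of_le_of_lt (Nat.sub_le _ _) i.isLt⟩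

/-- The symplectic inner product on `F_p^n × F_p^n`. -/
def sympForm (p n : ℕ) (u v : (Fin n → ZMod p) × (Fin n → ZMod p)) : ZMod p :=
  (∑ j, u.1 j * v.2 j) - (∑ j, u.2 j * v.1 j)

/-- The cyclotomic ring `R = F_p[X]/(X^n + 1)`. -/
abbrev Rpn (p n : ℕ) := Polynomial (ZMod p) ⧸ Ideal.span {(X : Polynomial (ZMod p)) ^ n + 1}

/-- The quotient map `F_p[X] → R`. -/
noncomputable def mkR (p n : ℕ) : Polynomial (ZMod p) →+* Rpn p n :=
  Ideal.Quotient.mk (Ideal.span {(X : Polynomial (ZMod p)) ^ n + 1})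

/-- The polynomial `a_0 + a_1 X + ⋯ + a_{n−1} X^{n−1}` attached to a vector. -/
noncomputable def toPoly (p n : ℕ) (a : Fin n → ZMod p) : Polynomial (ZMod p) :=
  ∑ j : Fin n, C (a j) * X ^ (j : ℕ)

/-- The identification `F_p^n → R`, `a ↦ a(x)`. -/
noncomputable def toR (p n : ℕ) (a : Fin n → ZMod p) : Rpn p n := mkR p n (toPoly p n a)

/-- `x⁻¹ = −x^{n−1}` in `R`, where `x` is the image of `X`. -/
noncomputable def xinv (p n : ℕ) : Rpn p n := -(mkR p n X) ^ (n - 1)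

namespace Stmt3Aux

variable (p n : ℕ) [Fact p.Prime] (hn : 0 < n)

include hn

lemma monic_f : ((X : Polynomial (ZMod p)) ^ n + 1 : Polynomial (ZMod p)).Monic := by
  have h : ((X : Polynomial (ZMod p)) ^ n + 1) = X ^ n + C 1 := by rw [map_one]
  rw [h]
  exact monic_X_pow_add_C (1 : ZMod p) hn.ne'

/-- the power basis of `Rpn`. -/
noncomputable def pb : PowerBasis (ZMod p) (Rpn p n) :=
  AdjoinRoot.powerBasis' (monic_f p n hn)

lemma pb_dim : (pb p n hn).dim = n := by
  show ((X : Polynomial (ZMod p)) ^ n + 1).natDegree = n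
  rw [show ((X : Polynomial (ZMod p)) ^ n + 1) = X ^ n + C 1 by rw [map_one]]
  exact natDegree_X_pow_add_C

/-- the basis `1, x, ..., x^{n-1}` of `Rpn`, reindexed by `Fin n`. -/
noncomputable def bR : Module.Basis (Fin n) (ZMod p) (Rpn p n) :=
  (pb p n hn).basis.reindex (finCongr (pb_dim p n hn))

lemma bR_apply (i : Fin n) : bR p n hn i = (mkR p n X) ^ (i : ℕ) := by
  rw [bR, Module.Basis.reindex_apply, (pb p n hn).basis_eq_pow]
  rfl

/-- the `0`-th coordinate functional. -/
noncomputable def c0 : Rpn p n →ₗ[ZMod p] ZMod p :=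
  (Finsupp.lapply (⟨0, hn⟩ : Fin n)) ∘ₗ (bR p n hn).repr.toLinearMap

lemma c0_apply (r : Rpn p n) : c0 p n hn r = (bR p n hn).repr r ⟨0, hn⟩ := rfl

lemma xpow_n : (mkR p n X) ^ n = -1 := by
  have h0 : mkR p n ((X : Polynomial (ZMod p)) ^ n + 1) = 0 :=
    Ideal.Quotient.eq_zero_iff_mem.mpr (Ideal.subset_span (Set.mem_singleton _))
  rw [map_add, map_pow, map_one] at h0
  exact eq_neg_of_add_eq_zero_left h0

lemma xinv_mul_x : xinv p n * mkR p n X = 1 := by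
  have h : (mkR p n X) ^ (n - 1) * mkR p n X = (mkR p n X) ^ n := by
    rw [← pow_succ, show n - 1 + 1 = n from by omega]
  calc xinv p n * mkR p n X = -((mkR p n X) ^ (n - 1) * mkR p n X) := by rw [xinv]; ring
    _ = -((mkR p n X) ^ n) := by rw [h]
    _ = 1 := by rw [xpow_n p n hn, neg_neg]

lemma xinv_pow_eq (m : ℕ) (hm : m ≤ n) : (xinv p n) ^ m = -(mkR p n X) ^ (n - m) := by
  have h1 : (xinv p n) ^ m * (mkR p n X) ^ m = 1 := by
    rw [← mul_pow, xinv_mul_x p n hn, one_pow]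
  have h2 : (mkR p n X) ^ m * (-(mkR p n X) ^ (n - m)) = 1 := by
    have hh : (mkR p n X) ^ m * (mkR p n X) ^ (n - m) = (mkR p n X) ^ n := by
      rw [← pow_add, show m + (n - m) = n from by omega]
    calc (mkR p n X) ^ m * (-(mkR p n X) ^ (n - m))
        = -((mkR p n X) ^ m * (mkR p n X) ^ (n - m)) := by ring
      _ = -((mkR p n X) ^ n) := by rw [hh]
      _ = 1 := by rw [xpow_n p n hn, neg_neg]
  calc (xinv p n) ^ m = (xinv p n) ^ m * ((mkR p n X) ^ m * (-(mkR p n X) ^ (n - m))) := by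
        rw [h2, mul_one]
    _ = ((xinv p n) ^ m * (mkR p n X) ^ m) * (-(mkR p n X) ^ (n - m)) := by ring
    _ = -(mkR p n X) ^ (n - m) := by rw [h1, one_mul]

lemma c0_xpow (m : ℕ) (hm : m < n) :
    c0 p n hn ((mkR p n X) ^ m) = if m = 0 then 1 else 0 := by
  have h : (mkR p n X) ^ m = bR p n hn ⟨m, hm⟩ := (bR_apply p n hn ⟨m, hm⟩).symm
  rw [h, c0_apply, Module.Basis.repr_self, Finsupp.single_apply]
  by_cases h0 : m = 0
  · simp [h0]
  · simp [h0, Fin.ext_iff]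

lemma c0_mixed (i j : ℕ) (hi : i < n) (hj : j < n) :
    c0 p n hn ((mkR p n X) ^ i * (xinv p n) ^ j) = if i = j then 1 else 0 := by
  rcases le_or_gt j i with h | h
  · have h1 : (mkR p n X) ^ j * (xinv p n) ^ j = 1 := by
      rw [← mul_pow, mul_comm, xinv_mul_x p n hn, one_pow]
    have h2 : (mkR p n X) ^ i * (xinv p n) ^ j = (mkR p n X) ^ (i - j) := by
      rw [show (mkR p n X) ^ i = (mkR p n X) ^ (i - j) * (mkR p n X) ^ j by
            rw [← pow_add, show i - j + j = i from by omega],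
        mul_assoc, h1, mul_one]
    rw [h2, c0_xpow p n hn _ (by omega)]
    by_cases hij : i = j
    · simp [hij]
    · have : i - j ≠ 0 := by omega
      simp [this, hij]
  · have h1 : (mkR p n X) ^ i * (xinv p n) ^ i = 1 := by
      rw [← mul_pow, mul_comm, xinv_mul_x p n hn, one_pow]
    have h2 : (mkR p n X) ^ i * (xinv p n) ^ j = (xinv p n) ^ (j - i) := by
      rw [show (xinv p n) ^ j = (xinv p n) ^ (j - i) * (xinv p n) ^ i by
            rw [← pow_add, show j - i + i = j from by omega]]
      calc (mkR p n X) ^ i * ((xinv p n) ^ (j - i) * (xinv p n) ^ i)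
          = (xinv p n) ^ (j - i) * ((mkR p n X) ^ i * (xinv p n) ^ i) := by ring
        _ = (xinv p n) ^ (j - i) := by rw [h1, mul_one]
    rw [h2, xinv_pow_eq p n hn _ (by omega), map_neg, c0_xpow p n hn _ (by omega)]
    have h3 : n - (j - i) ≠ 0 := by omega
    have h4 : i ≠ j := by omega
    simp [h3, h4]

lemma mk_C (r : ZMod p) : mkR p n (C r) = algebraMap (ZMod p) (Rpn p n) r := by
  rw [mkR, ← Polynomial.algebraMap_eq, Ideal.Quotient.mk_algebraMap]

lemma toR_eq (a : Fin n → ZMod p) :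
    toR p n a = ∑ i : Fin n, a i • (mkR p n X) ^ (i : ℕ) := by
  rw [toR, toPoly, map_sum]
  refine Finset.sum_congr rfl fun i _ => ?_
  rw [map_mul, map_pow, mk_C p n hn]
  exact (Algebra.smul_def _ _).symm

lemma aeval_toPoly (d : Fin n → ZMod p) :
    aeval (xinv p n) (toPoly p n d) = ∑ j : Fin n, d j • (xinv p n) ^ (j : ℕ) := by
  rw [toPoly, map_sum]
  refine Finset.sum_congr rfl fun j _ => ?_
  rw [map_mul, aeval_C, map_pow, aeval_X]
  exact (Algebra.smul_def _ _).symm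

lemma c0_prod (a d : Fin n → ZMod p) :
    c0 p n hn (toR p n a * aeval (xinv p n) (toPoly p n d)) = ∑ j, a j * d j := by
  rw [toR_eq p n hn, aeval_toPoly p n hn, Finset.sum_mul_sum]
  have hterm : ∀ i j : Fin n,
      (a i • (mkR p n X) ^ (i : ℕ)) * (d j • (xinv p n) ^ (j : ℕ))
        = (a i * d j) • ((mkR p n X) ^ (i : ℕ) * (xinv p n) ^ (j : ℕ)) := by
    intro i j
    rw [smul_mul_assoc, mul_smul_comm, smul_smul]
  simp only [hterm, map_sum, map_smul, smul_eq_mul]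
  have : ∀ i j : Fin n,
      c0 p n hn ((mkR p n X) ^ (i : ℕ) * (xinv p n) ^ (j : ℕ)) = if i = j then 1 else 0 := by
    intro i j
    rw [c0_mixed p n hn _ _ i.isLt j.isLt]
    simp [Fin.ext_iff]
  simp only [this]
  simp [mul_ite, Finset.sum_ite_eq]

lemma c0_xinv_mul (k : Fin n) (r : Rpn p n) :
    c0 p n hn ((xinv p n) ^ (k : ℕ) * r) = (bR p n hn).repr r k := by
  conv_lhs => rw [← (bR p n hn).sum_repr r]
  rw [Finset.mul_sum]
  have hterm : ∀ i : Fin n,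
      (xinv p n) ^ (k : ℕ) * ((bR p n hn).repr r i • bR p n hn i)
        = ((bR p n hn).repr r i) • ((mkR p n X) ^ (i : ℕ) * (xinv p n) ^ (k : ℕ)) := by
    intro i
    rw [bR_apply, mul_smul_comm, mul_comm]
  simp only [hterm, map_sum, map_smul, smul_eq_mul]
  have : ∀ i : Fin n,
      c0 p n hn ((mkR p n X) ^ (i : ℕ) * (xinv p n) ^ (k : ℕ)) = if i = k then 1 else 0 := by
    intro i
    rw [c0_mixed p n hn _ _ i.isLt k.isLt]
    simp [Fin.ext_iff]
  simp only [this]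
  simp [mul_ite, Finset.sum_ite_eq]

lemma aeval_negashift (d : Fin n → ZMod p) :
    aeval (xinv p n) (toPoly p n (negashift p n hn d))
      = xinv p n * aeval (xinv p n) (toPoly p n d) := by
  obtain ⟨m, rfl⟩ : ∃ m, n = m + 1 := ⟨n - 1, by omega⟩
  rw [aeval_toPoly p (m + 1) hn, aeval_toPoly p (m + 1) hn, Finset.mul_sum]
  have hR : ∀ j : Fin (m + 1),
      xinv p (m + 1) * (d j • (xinv p (m + 1)) ^ (j : ℕ))
        = d j • (xinv p (m + 1)) ^ ((j : ℕ) + 1) := by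
    intro j; rw [mul_smul_comm, ← pow_succ']
  simp only [hR]
  rw [Fin.sum_univ_castSucc
    (f := fun j : Fin (m + 1) => d j • (xinv p (m + 1)) ^ ((j : ℕ) + 1))]
  rw [Fin.sum_univ_succ
    (f := fun i : Fin (m + 1) => negashift p (m + 1) hn d i • (xinv p (m + 1)) ^ (i : ℕ))]
  have h0 : negashift p (m + 1) hn d 0 = -d (Fin.last m) := by
    simp [negashift, Fin.last]
  have hsucc : ∀ i : Fin m, negashift p (m + 1) hn d i.succ = d i.castSucc := by
    intro i
    simp only [negashift, Fin.val_succ, Nat.succ_ne_zero, if_false]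
    congr 1
  have hlast : (xinv p (m + 1)) ^ (m + 1) = -1 := by
    rw [xinv_pow_eq p (m + 1) hn (m + 1) le_rfl, Nat.sub_self, pow_zero]
  rw [h0]
  simp only [hsucc, hlast, Fin.val_succ, Fin.coe_castSucc, Fin.val_zero, Fin.val_last, pow_zero,
    neg_smul, smul_neg, smul_eq_mul]
  exact add_comm _ _

/-- The quantity `a(x) d(x⁻¹) - b(x) c(x⁻¹)`. -/
noncomputable def Fval (u v : (Fin n → ZMod p) × (Fin n → ZMod p)) : Rpn p n :=
  toR p n u.1 * aeval (xinv p n) (toPoly p n v.2)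
    - toR p n u.2 * aeval (xinv p n) (toPoly p n v.1)

lemma Fval_shift (u v : (Fin n → ZMod p) × (Fin n → ZMod p)) :
    Fval p n u (negashift p n hn v.1, negashift p n hn v.2) = xinv p n * Fval p n u v := by
  unfold Fval
  simp only
  rw [aeval_negashift p n hn, aeval_negashift p n hn]
  ring

lemma sympForm_eq (u v : (Fin n → ZMod p) × (Fin n → ZMod p)) :
    sympForm p n u v = c0 p n hn (Fval p n u v) := by
  rw [Fval, map_sub, c0_prod p n hn, c0_prod p n hn, sympForm]

end Stmt3Aux

open Stmt3Aux in
theorem stmt3 (p n : ℕ) [Fact p.Prime] (hp : Odd p) (hn : 0 < n)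
    (S : Submodule (ZMod p) ((Fin n → ZMod p) × (Fin n → ZMod p)))
    (hneg : ∀ ab ∈ S, (negashift p n hn ab.1, negashift p n hn ab.2) ∈ S) :
    (∀ u ∈ S, ∀ v ∈ S, sympForm p n u v = 0) ↔
      (∀ u ∈ S, ∀ v ∈ S,
        toR p n u.1 * aeval (xinv p n) (toPoly p n v.2)
          - toR p n u.2 * aeval (xinv p n) (toPoly p n v.1) = 0) := by
  constructor
  · intro hIso u hu v hv
    show Fval p n u v = 0
    set N : ((Fin n → ZMod p) × (Fin n → ZMod p)) → ((Fin n → ZMod p) × (Fin n → ZMod p)) :=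
      fun w => (negashift p n hn w.1, negashift p n hn w.2) with hN
    have hmem : ∀ k : ℕ, N^[k] v ∈ S := by
      intro k
      induction k with
      | zero => simpa using hv
      | succ k ih => rw [Function.iterate_succ_apply']; exact hneg _ ih
    have hFk : ∀ k : ℕ, Fval p n u (N^[k] v) = (xinv p n) ^ k * Fval p n u v := by
      intro k
      induction k with
      | zero => simp
      | succ k ih =>
          rw [Function.iterate_succ_apply', hN]
          rw [Fval_shift p n hn, ih, pow_succ]
          ring
    have hrepr : (bR p n hn).repr (Fval p n u v) = 0 := by
      ext k
      rw [Finsupp.coe_zero, Pi.zero_apply, ← c0_xinv_mul p n hn k, ← hFk k,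
        ← sympForm_eq p n hn]
      exact hIso u hu _ (hmem k)
    exact (LinearEquiv.map_eq_zero_iff _).mp hrepr
  · intro h u hu v hv
    have h0 : Fval p n u v = 0 := h u hu v hv
    rw [sympForm_eq p n hn, h0, map_zero]
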